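/- arXiv:1204.0166 — 2 statements merged into one kernel-verified Lean document; each statement's English description precedes it below -/
import Mathlib

section
/- Let Q be a Hermitian n×n matrix, h̄ ∈ ℂ^n, r > 0. Then the minimum of (h̄+e)^H Q (h̄+e) over ‖e‖² ≤ r² equals the minimum of tr(Q [I, h̄] V [I, h̄]^H) over Hermitian PSD (n+1)×(n+1) matrices V with tr(V) ≤ 1 + r² and last diagonal entry [V]_{n+1,n+1} = 1. In particular the semidefinite relaxation of the inner minimization is tight. -/
open scoped ComplexOrder
open Matrix

section SDRAux

open Complex

variable {n : ℕ}

/-- sInf transfer via mutual domination. -/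
lemma SDR.sInf_eq_of_dominates {S T : Set ℝ} (hS : S.Nonempty) (hT : T.Nonempty)
    (h1 : ∀ x ∈ S, ∃ y ∈ T, y ≤ x) (h2 : ∀ y ∈ T, ∃ x ∈ S, x ≤ y) : sInf S = sInf T := by
  by_cases hb : BddBelow S
  · have hbT : BddBelow T := by
      obtain ⟨b, hbS⟩ := hb
      exact ⟨b, fun y hy => by obtain ⟨x, hxS, hxy⟩ := h2 y hy; exact (hbS hxS).trans hxy⟩
    apply le_antisymm
    · refine le_csInf hT fun y hy => ?_
      obtain ⟨x, hxS, hxy⟩ := h2 y hy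
      exact (csInf_le hb hxS).trans hxy
    · refine le_csInf hS fun x hx => ?_
      obtain ⟨y, hyT, hyx⟩ := h1 x hx
      exact (csInf_le hbT hyT).trans hyx
  · have hbT : ¬ BddBelow T := by
      intro ⟨b, hbT⟩
      exact hb ⟨b, fun x hx => by obtain ⟨y, hyT, hyx⟩ := h1 x hx; exact (hbT hyT).trans hyx⟩
    rw [csInf_of_not_bddBelow hb, csInf_of_not_bddBelow hbT]

/-- Choice of a common phase putting two complex numbers in the left half plane. -/
lemma SDR.exists_phase (a b : ℂ) :
    ∃ ω : ℂ, ‖ω‖ = 1 ∧ (ω * a).re ≤ 0 ∧ (ω * b).re ≤ 0 := by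
  obtain ⟨ω₀, hω₀, hω₀a⟩ : ∃ ω₀ : ℂ, ‖ω₀‖ = 1 ∧ ω₀ * a = -(‖a‖ : ℂ) := by
    by_cases ha : a = 0
    · exact ⟨1, by simp [ha]⟩
    · refine ⟨-(starRingEnd ℂ a) / (‖a‖ : ℂ), ?_, ?_⟩
      · simp [map_div₀, Complex.norm_conj, div_self, norm_ne_zero_iff.mpr ha]
      · rw [div_mul_eq_mul_div, neg_mul, mul_comm, Complex.mul_conj,
          div_eq_iff (by simpa using norm_ne_zero_iff.mpr ha), ← Complex.sq_norm]
        push_cast; ring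
  have ha0 : (0:ℝ) ≤ ‖a‖ := norm_nonneg a
  by_cases hb0 : (ω₀ * b).re ≤ 0
  · exact ⟨ω₀, hω₀, by rw [hω₀a]; simpa using ha0, hb0⟩
  · by_cases hb1 : ((Complex.I * ω₀) * b).re ≤ 0
    · refine ⟨Complex.I * ω₀, by simp [hω₀], ?_, hb1⟩
      rw [mul_assoc, hω₀a]; simp
    · refine ⟨-(Complex.I * ω₀), by simp [hω₀], ?_, ?_⟩
      · rw [neg_mul, mul_assoc, hω₀a]; simp
      · rw [neg_mul, neg_re, neg_nonpos]
        exact le_of_lt (lt_of_not_ge hb1)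

lemma SDR.star_quad (A : Matrix (Fin n) (Fin n) ℂ) (x y : Fin n → ℂ) :
    star (star x ⬝ᵥ A *ᵥ y) = star y ⬝ᵥ Aᴴ *ᵥ x := by
  simp only [dotProduct, mulVec, dotProduct, star_sum, star_mul', Pi.star_apply, star_star,
    conjTranspose_apply, Finset.mul_sum, Finset.sum_mul]
  rw [Finset.sum_comm]
  exact Finset.sum_congr rfl fun i _ => Finset.sum_congr rfl fun j _ => by ring

lemma SDR.trace_mul_vecMulVec (Q : Matrix (Fin n) (Fin n) ℂ) (x y : Fin n → ℂ) :
    (Q * vecMulVec x y).trace = y ⬝ᵥ Q *ᵥ x := by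
  simp only [Matrix.trace, Matrix.diag, Matrix.mul_apply, vecMulVec_apply, dotProduct, mulVec,
    dotProduct, Finset.mul_sum]
  exact Finset.sum_congr rfl fun i _ => Finset.sum_congr rfl fun j _ => by ring

lemma SDR.psd_diag_nonneg {m : Type*} [Fintype m] [DecidableEq m] {M : Matrix m m ℂ}
    (hM : M.PosSemidef) (i : m) : 0 ≤ M i i := by
  simpa [dotProduct, Pi.single_apply, apply_ite] using hM.dotProduct_mulVec_nonneg (Pi.single i 1)

open scoped MatrixOrder in
lemma SDR.psd_eq_ct_mul_self {m : Type*} [Fintype m] [DecidableEq m] {M : Matrix m m ℂ}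
    (hM : M.PosSemidef) : ∃ B : Matrix m m ℂ, M = Bᴴ * B := by
  obtain ⟨X, hX, -, rfl⟩ := CFC.exists_sqrt_of_isSelfAdjoint_of_quasispectrumRestricts
    hM.isHermitian (QuasispectrumRestricts.nnreal_of_nonneg hM.nonneg)
  refine ⟨X, ?_⟩
  rw [← star_eq_conjTranspose, hX.star_eq]

lemma SDR.psd_eq_zero_of_trace_re {m : Type*} [Fintype m] [DecidableEq m] {M : Matrix m m ℂ}
    (hM : M.PosSemidef) (h : M.trace.re = 0) : M = 0 := by
  obtain ⟨B, rfl⟩ := SDR.psd_eq_ct_mul_self hM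
  have hB : B = 0 := by
    have htr : (Bᴴ * B).trace.re = ∑ i, ∑ k, Complex.normSq (B k i) := by
      simp only [Matrix.trace, Matrix.diag, Matrix.mul_apply, conjTranspose_apply,
        Complex.re_sum]
      refine Finset.sum_congr rfl fun i _ => Finset.sum_congr rfl fun k _ => ?_
      simp [Complex.mul_re, Complex.normSq_apply]
    rw [htr] at h
    ext k i
    have h1 : ∀ i ∈ Finset.univ, (0:ℝ) ≤ ∑ k, Complex.normSq (B k i) :=
      fun i _ => Finset.sum_nonneg fun k _ => Complex.normSq_nonneg _
    have h2 := (Finset.sum_eq_zero_iff_of_nonneg h1).mp h i (Finset.mem_univ i)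
    have h3 := (Finset.sum_eq_zero_iff_of_nonneg
      (fun k _ => Complex.normSq_nonneg (B k i))).mp h2 k (Finset.mem_univ k)
    simpa [Complex.normSq_eq_zero] using h3
  rw [hB]; simp

lemma SDR.pd_trace_mul_re_pos {A B : Matrix (Fin n) (Fin n) ℂ}
    (hA : A.PosDef) (hB : B.PosSemidef) (hB0 : B ≠ 0) : 0 < ((A * B).trace).re := by
  obtain ⟨C, rfl⟩ := SDR.psd_eq_ct_mul_self hB
  have hC : C ≠ 0 := by rintro rfl; simp at hB0
  have key : ∀ i, (C * A * Cᴴ) i i = star (star (C i)) ⬝ᵥ A *ᵥ (star (C i)) := by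
    intro i
    simp only [Matrix.mul_apply, conjTranspose_apply, dotProduct, mulVec, dotProduct,
      Pi.star_apply, star_star, Finset.mul_sum, Finset.sum_mul]
    rw [Finset.sum_comm]
    exact Finset.sum_congr rfl fun k _ => Finset.sum_congr rfl fun l _ => by ring
  have htr : (A * (Cᴴ * C)).trace = (C * A * Cᴴ).trace := by
    rw [← mul_assoc, Matrix.trace_mul_cycle]
  rw [htr]
  obtain ⟨i₀, hi₀⟩ : ∃ i₀, C i₀ ≠ 0 := by
    by_contra hc; push_neg at hc
    exact hC (by ext i j; simpa using congrFun (hc i) j)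
  rw [Matrix.trace, Complex.re_sum]
  refine Finset.sum_pos' (fun i _ => ?_) ⟨i₀, Finset.mem_univ i₀, ?_⟩
  · rw [Matrix.diag_apply, key i]
    exact (Complex.le_def.mp (hA.posSemidef.dotProduct_mulVec_nonneg (star (C i)))).1
  · rw [Matrix.diag_apply, key i₀]
    exact (Complex.lt_def.mp (hA.dotProduct_mulVec_pos (x := star (C i₀)) (by simpa using hi₀))).1

lemma SDR.psd_vecMulVec {m : Type*} [Fintype m] (w : m → ℂ) :
    (vecMulVec w (star w)).PosSemidef := by
  refine Matrix.PosSemidef.of_dotProduct_mulVec_nonneg ?_ ?_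
  · ext i j
    simp only [conjTranspose_apply, vecMulVec_apply, Pi.star_apply, star_mul', star_star]
    ring
  · intro x
    have h : star x ⬝ᵥ (vecMulVec w (star w)) *ᵥ x = star (star w ⬝ᵥ x) * (star w ⬝ᵥ x) := by
      simp only [dotProduct, mulVec, vecMulVec_apply, Pi.star_apply, dotProduct, star_sum,
        star_mul', star_star, Finset.sum_mul, Finset.mul_sum]
      rw [Finset.sum_comm]
      exact Finset.sum_congr rfl fun i _ => Finset.sum_congr rfl fun j _ => by ring
    rw [h]
    exact star_mul_self_nonneg _

lemma SDR.star_dot_self (x : Fin n → ℂ) :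
    star x ⬝ᵥ x = ((∑ i, Complex.normSq (x i) : ℝ) : ℂ) := by
  rw [Complex.ofReal_sum]
  simp only [dotProduct, Pi.star_apply]
  exact Finset.sum_congr rfl fun i _ => (Complex.normSq_eq_conj_mul_self (z := x i)).symm

lemma SDR.herm_quad_im {Q : Matrix (Fin n) (Fin n) ℂ} (hQ : Q.IsHermitian) (x : Fin n → ℂ) :
    (star x ⬝ᵥ Q *ᵥ x).im = 0 := by
  have h := SDR.star_quad Q x x
  rw [hQ.eq] at h
  have := congrArg Complex.im h
  simp only [star_def, Complex.conj_im] at this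
  linarith

lemma SDR.herm_quad_re_swap {Q : Matrix (Fin n) (Fin n) ℂ} (hQ : Q.IsHermitian) (x y : Fin n → ℂ) :
    (star y ⬝ᵥ Q *ᵥ x).re = (star x ⬝ᵥ Q *ᵥ y).re := by
  have h := SDR.star_quad Q x y
  rw [hQ.eq] at h
  rw [← h]
  simp [star_def]

lemma SDR.quad_re_add {Q : Matrix (Fin n) (Fin n) ℂ} (hQ : Q.IsHermitian) (m w : Fin n → ℂ) :
    (star (m + w) ⬝ᵥ Q *ᵥ (m + w)).re
      = (star m ⬝ᵥ Q *ᵥ m).re + 2 * (star m ⬝ᵥ Q *ᵥ w).re + (star w ⬝ᵥ Q *ᵥ w).re := by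
  rw [star_add, Matrix.mulVec_add, add_dotProduct, dotProduct_add, dotProduct_add]
  simp only [Complex.add_re]
  rw [SDR.herm_quad_re_swap hQ w m]
  ring

lemma SDR.schur_psd (V : Matrix (Fin n ⊕ Fin 1) (Fin n ⊕ Fin 1) ℂ) (hV : V.PosSemidef)
    (hc : V (Sum.inr 0) (Sum.inr 0) = 1) :
    (Matrix.of fun i j => V (Sum.inl i) (Sum.inl j)
      - V (Sum.inl i) (Sum.inr 0) * star (V (Sum.inl j) (Sum.inr 0))).PosSemidef := by
  have hD : V.toBlocks₂₂ = 1 := by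
    ext i j
    fin_cases i <;> fin_cases j
    simpa [Matrix.toBlocks₂₂] using hc
  have h21 : V.toBlocks₂₁ = (V.toBlocks₁₂)ᴴ := by
    ext i j
    simp only [Matrix.toBlocks₂₁, Matrix.toBlocks₁₂, conjTranspose_apply, of_apply]
    exact (hV.1.apply (Sum.inr i) (Sum.inl j)).symm
  have hVb : V = fromBlocks V.toBlocks₁₁ V.toBlocks₁₂ (V.toBlocks₁₂)ᴴ 1 := by
    rw [← h21, ← hD, fromBlocks_toBlocks]
  have hpd : (1 : Matrix (Fin 1) (Fin 1) ℂ).PosDef := Matrix.PosDef.one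
  haveI : Invertible (1 : Matrix (Fin 1) (Fin 1) ℂ) := invertibleOne
  have hres := (Matrix.PosDef.fromBlocks₂₂ V.toBlocks₁₁ V.toBlocks₁₂ hpd).mp (hVb ▸ hV)
  have heq : V.toBlocks₁₁ - V.toBlocks₁₂ * (1 : Matrix (Fin 1) (Fin 1) ℂ)⁻¹ * (V.toBlocks₁₂)ᴴ
      = Matrix.of fun i j => V (Sum.inl i) (Sum.inl j)
          - V (Sum.inl i) (Sum.inr 0) * star (V (Sum.inl j) (Sum.inr 0)) := by
    ext i j
    simp [Matrix.toBlocks₁₁, Matrix.toBlocks₁₂, Matrix.mul_apply, Fin.sum_univ_one, inv_one]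
  rwa [heq] at hres

end SDRAux

/-- The `n × (n+1)` matrix `[I, h̄]` (identity augmented by the column `h̄`). -/
noncomputable def appendCol {n : ℕ} (hbar : Fin n → ℂ) :
    Matrix (Fin n) (Fin n ⊕ Fin 1) ℂ :=
  Matrix.fromCols 1 (Matrix.replicateCol (Fin 1) hbar)

section KeyDecomp

variable {n : ℕ}

lemma SDR.key_decomp (hbar : Fin n → ℂ) (V : Matrix (Fin n ⊕ Fin 1) (Fin n ⊕ Fin 1) ℂ)
    (hV : V.IsHermitian) (hc : V (Sum.inr 0) (Sum.inr 0) = 1) :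
    appendCol hbar * V * (appendCol hbar)ᴴ
      = (Matrix.of fun i j => V (Sum.inl i) (Sum.inl j)
          - V (Sum.inl i) (Sum.inr 0) * star (V (Sum.inl j) (Sum.inr 0)))
        + vecMulVec (hbar + fun i => V (Sum.inl i) (Sum.inr 0))
            (star (hbar + fun j => V (Sum.inl j) (Sum.inr 0))) := by
  have hsym : ∀ j, V (Sum.inr 0) (Sum.inl j) = star (V (Sum.inl j) (Sum.inr 0)) :=
    fun j => (hV.apply (Sum.inr 0) (Sum.inl j)).symm
  ext i j
  simp only [Matrix.mul_apply, appendCol, fromCols, conjTranspose_apply, of_apply,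
    Fintype.sum_sum_type, Fin.sum_univ_one, Sum.elim_inl, Sum.elim_inr, replicateCol_apply,
    one_apply, ite_mul, one_mul, zero_mul, apply_ite (star : ℂ → ℂ), star_one, star_zero,
    mul_ite, mul_one, mul_zero, Finset.sum_ite_eq, Finset.sum_ite_eq', Finset.mem_univ, if_true,
    Pi.add_apply, Pi.star_apply, vecMulVec_apply, star_mul', star_add,
    Matrix.add_apply, hsym, hc]
  ring

end KeyDecomp

/-- Tightness of the SDR of the ball-constrained quadratic minimization: the minimum of
`(h̄+e)ᴴ Q (h̄+e)` over `‖e‖² ≤ r²` equals the minimum of `tr(Q [I,h̄] V [I,h̄]ᴴ)` over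
Hermitian PSD `V` with `tr(V) ≤ 1 + r²` and last diagonal entry `1`. -/
theorem sdr_tight_ball_quadratic_min (n : ℕ) (Q : Matrix (Fin n) (Fin n) ℂ)
    (hQ : Q.IsHermitian) (hbar : Fin n → ℂ) (r : ℝ) (hr : 0 < r) :
    sInf {x : ℝ | ∃ e : Fin n → ℂ, ∑ i, Complex.normSq (e i) ≤ r ^ 2 ∧
        x = (star (hbar + e) ⬝ᵥ Q *ᵥ (hbar + e)).re}
    = sInf {x : ℝ | ∃ V : Matrix (Fin n ⊕ Fin 1) (Fin n ⊕ Fin 1) ℂ,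
        V.PosSemidef ∧ V.trace.re ≤ 1 + r ^ 2 ∧
        V (Sum.inr 0) (Sum.inr 0) = 1 ∧
        x = ((Q * (appendCol hbar * V * (appendCol hbar)ᴴ)).trace).re} := by
  have hr2 : (0:ℝ) < r ^ 2 := by positivity
  -- direction A: every feasible e yields a feasible V with the same value
  have hT_of_e : ∀ e : Fin n → ℂ, (∑ i, Complex.normSq (e i)) ≤ r ^ 2 →
      (star (hbar + e) ⬝ᵥ Q *ᵥ (hbar + e)).re ∈
        {x : ℝ | ∃ V : Matrix (Fin n ⊕ Fin 1) (Fin n ⊕ Fin 1) ℂ,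
          V.PosSemidef ∧ V.trace.re ≤ 1 + r ^ 2 ∧
          V (Sum.inr 0) (Sum.inr 0) = 1 ∧
          x = ((Q * (appendCol hbar * V * (appendCol hbar)ᴴ)).trace).re} := by
    intro e he
    set w : (Fin n ⊕ Fin 1) → ℂ := Sum.elim e (fun _ => 1) with hw
    refine ⟨vecMulVec w (star w), SDR.psd_vecMulVec w, ?_, ?_, ?_⟩
    · have : (vecMulVec w (star w)).trace.re = (∑ i, Complex.normSq (e i)) + 1 := by
        rw [Matrix.trace]
        simp only [Matrix.diag_apply, vecMulVec_apply, Pi.star_apply, Complex.re_sum,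
          Fintype.sum_sum_type, Fin.sum_univ_one, hw, Sum.elim_inl, Sum.elim_inr]
        simp [Complex.mul_re, Complex.normSq_apply]
      rw [this]; linarith
    · simp [vecMulVec_apply, hw]
    · rw [SDR.key_decomp hbar _ (SDR.psd_vecMulVec w).1 (by simp [vecMulVec_apply, hw])]
      have hM0 : (Matrix.of fun i j => vecMulVec w (star w) (Sum.inl i) (Sum.inl j)
          - vecMulVec w (star w) (Sum.inl i) (Sum.inr 0)
            * star (vecMulVec w (star w) (Sum.inl j) (Sum.inr 0)))
          = (0 : Matrix (Fin n) (Fin n) ℂ) := by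
        ext i j
        simp [vecMulVec_apply, hw]
      have hveq : (fun i => vecMulVec w (star w) (Sum.inl i) (Sum.inr 0)) = e := by
        funext i; simp [vecMulVec_apply, hw]
      rw [hM0, hveq, Matrix.mul_add, Matrix.mul_zero, zero_add, SDR.trace_mul_vecMulVec]
  apply SDR.sInf_eq_of_dominates
  · exact ⟨_, 0, by simpa using le_of_lt hr2, rfl⟩
  · exact ⟨_, hT_of_e 0 (by simpa using le_of_lt hr2)⟩
  · rintro x ⟨e, he, rfl⟩
    exact ⟨_, hT_of_e e he, le_refl _⟩
  · rintro x ⟨V, hPSD, htrV, hcorner, rfl⟩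
    set v : Fin n → ℂ := fun i => V (Sum.inl i) (Sum.inr 0) with hv
    set M : Matrix (Fin n) (Fin n) ℂ :=
      Matrix.of (fun i j => V (Sum.inl i) (Sum.inl j) - v i * star (v j)) with hM
    have hMpsd : M.PosSemidef := SDR.schur_psd V hPSD hcorner
    have hval : ((Q * (appendCol hbar * V * (appendCol hbar)ᴴ)).trace).re
        = ((Q * M).trace).re + (star (hbar + v) ⬝ᵥ Q *ᵥ (hbar + v)).re := by
      rw [SDR.key_decomp hbar V hPSD.1 hcorner, Matrix.mul_add, Matrix.trace_add,
        SDR.trace_mul_vecMulVec, Complex.add_re]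
    have hdiag : ∀ i, 0 ≤ (M i i).re ∧ (M i i).im = 0 := by
      intro i
      have h := SDR.psd_diag_nonneg hMpsd i
      rw [Complex.le_def] at h
      exact ⟨by simpa using h.1, by simpa using h.2.symm⟩
    have hs_nonneg : 0 ≤ M.trace.re := by
      rw [Matrix.trace, Complex.re_sum]
      exact Finset.sum_nonneg fun i _ => (hdiag i).1
    have hs_im : M.trace.im = 0 := by
      rw [Matrix.trace, Complex.im_sum]
      exact Finset.sum_eq_zero fun i _ => (hdiag i).2
    have hbound : (∑ i, Complex.normSq (v i)) + M.trace.re ≤ r ^ 2 := by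
      have h1 : V.trace.re = (∑ i, (V (Sum.inl i) (Sum.inl i)).re) + 1 := by
        rw [Matrix.trace]
        simp [Fintype.sum_sum_type, Fin.sum_univ_one, Complex.re_sum, hcorner]
      have h2 : M.trace.re = ∑ i, ((V (Sum.inl i) (Sum.inl i)).re - Complex.normSq (v i)) := by
        rw [Matrix.trace, Complex.re_sum]
        refine Finset.sum_congr rfl fun i _ => ?_
        simp only [Matrix.diag_apply, hM, Matrix.of_apply, Complex.sub_re, Complex.mul_re,
          Complex.normSq_apply, Pi.star_apply, Complex.star_def, Complex.conj_re,
          Complex.conj_im]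
        ring
      rw [h2, Finset.sum_sub_distrib] at *
      have h3 := htrV
      rw [h1] at h3
      linarith
    by_cases ht : 0 ≤ ((Q * M).trace).re
    · refine ⟨(star (hbar + v) ⬝ᵥ Q *ᵥ (hbar + v)).re, ⟨v, ?_, rfl⟩, ?_⟩
      · linarith [hbound]
      · rw [hval]; linarith
    · push_neg at ht
      have hM0 : M ≠ 0 := by
        intro h
        rw [h] at ht
        simp at ht
      have hs_pos : 0 < M.trace.re := by
        rcases lt_or_eq_of_le hs_nonneg with h | h
        · exact h
        · exact absurd (SDR.psd_eq_zero_of_trace_re hMpsd h.symm) hM0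
      set s := M.trace.re with hsdef
      set t := ((Q * M).trace).re with htdef
      set c := t / s with hcdef
      have hcs : c * s = t := div_mul_cancel₀ t (ne_of_gt hs_pos)
      have hu : ∃ u : Fin n → ℂ, u ≠ 0 ∧
          (star u ⬝ᵥ Q *ᵥ u).re ≤ c * ∑ i, Complex.normSq (u i) := by
        by_contra hcon
        push_neg at hcon
        have hpd : (Q - (c : ℂ) • 1).PosDef := by
          refine Matrix.PosDef.of_dotProduct_mulVec_pos ?_ ?_
          · refine hQ.sub ?_
            show ((c:ℂ) • (1 : Matrix (Fin n) (Fin n) ℂ))ᴴ = (c:ℂ) • 1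
            rw [conjTranspose_smul, conjTranspose_one]
            congr 1
            exact Complex.conj_ofReal c
          · intro x hx
            have hquad : star x ⬝ᵥ (Q - (c:ℂ) • 1) *ᵥ x
                = star x ⬝ᵥ Q *ᵥ x - (c:ℂ) * ((∑ i, Complex.normSq (x i) : ℝ) : ℂ) := by
              rw [Matrix.sub_mulVec, dotProduct_sub, Matrix.smul_mulVec,
                Matrix.one_mulVec, dotProduct_smul, SDR.star_dot_self, smul_eq_mul]
            rw [hquad, Complex.lt_def]
            constructor
            · have hlt := hcon x hx
              simp only [Complex.sub_re, Complex.zero_re, ← Complex.ofReal_mul,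
                Complex.ofReal_re]
              linarith
            · simp [SDR.herm_quad_im hQ x, ← Complex.ofReal_mul]
        have hgt := SDR.pd_trace_mul_re_pos hpd hMpsd hM0
        have heq : ((Q - (c:ℂ) • 1) * M).trace.re = t - c * s := by
          rw [Matrix.sub_mul, Matrix.trace_sub, Matrix.smul_mul, Matrix.one_mul,
            Matrix.trace_smul]
          simp only [Complex.sub_re, smul_eq_mul, Complex.mul_re, Complex.ofReal_re,
            Complex.ofReal_im, hs_im]
          rw [htdef, hsdef]
          ring
        rw [heq, hcs] at hgt
        linarith
      obtain ⟨u, hu0, huQ⟩ := hu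
      set nu := ∑ i, Complex.normSq (u i) with hnudef
      have hnu_pos : 0 < nu := by
        obtain ⟨i, hi⟩ := Function.ne_iff.mp hu0
        exact Finset.sum_pos' (fun j _ => Complex.normSq_nonneg _)
          ⟨i, Finset.mem_univ i, by simpa [Complex.normSq_pos] using hi⟩
      set τ := Real.sqrt (s / nu) with hτdef
      have hτ_nonneg : 0 ≤ τ := Real.sqrt_nonneg _
      have hτ2 : τ ^ 2 = s / nu := Real.sq_sqrt (by positivity)
      have hτ2nu : τ ^ 2 * nu = s := by
        rw [hτ2]; field_simp
      obtain ⟨ω, hω1, hωa, hωb⟩ := SDR.exists_phase (star (v ⬝ᵥ star u))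
        (star (hbar + v) ⬝ᵥ Q *ᵥ u)
      have hω_normSq : Complex.normSq ω = 1 := by
        rw [← Complex.sq_norm, hω1]; norm_num
      set γ : ℂ := (τ : ℂ) * ω with hγdef
      have hγnormSq : Complex.normSq γ = τ ^ 2 := by
        rw [hγdef, Complex.normSq_mul, Complex.normSq_ofReal, hω_normSq, mul_one, sq]
      have hconjγa : ((starRingEnd ℂ) γ * (v ⬝ᵥ star u)).re ≤ 0 := by
        have h1 : ((starRingEnd ℂ) ω * (v ⬝ᵥ star u)).re ≤ 0 := by
          have h2 : (starRingEnd ℂ) ω * (v ⬝ᵥ star u)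
              = star (ω * star (v ⬝ᵥ star u)) := by
            rw [star_mul', star_star]
            rfl
          rw [h2]
          have h3 : (star (ω * star (v ⬝ᵥ star u))).re = (ω * star (v ⬝ᵥ star u)).re := by
            simp [Complex.star_def]
          rw [h3]
          exact hωa
        have h4 : ((starRingEnd ℂ) γ * (v ⬝ᵥ star u)).re
            = τ * ((starRingEnd ℂ) ω * (v ⬝ᵥ star u)).re := by
          rw [hγdef, _root_.map_mul, Complex.conj_ofReal, mul_assoc, Complex.re_ofReal_mul]
        rw [h4]
        exact mul_nonpos_of_nonneg_of_nonpos hτ_nonneg h1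
      refine ⟨(star (hbar + (v + γ • u)) ⬝ᵥ Q *ᵥ (hbar + (v + γ • u))).re,
        ⟨v + γ • u, ?_, rfl⟩, ?_⟩
      · -- norm feasibility
        have hterm : ∀ i, Complex.normSq ((v + γ • u) i)
            = Complex.normSq (v i) + Complex.normSq γ * Complex.normSq (u i)
              + 2 * ((starRingEnd ℂ) γ * (v i * (starRingEnd ℂ) (u i))).re := by
          intro i
          simp only [Pi.add_apply, Pi.smul_apply, smul_eq_mul]
          rw [Complex.normSq_add, Complex.normSq_mul]
          simp only [_root_.map_mul]
          ring_nf
        have hdot : ((starRingEnd ℂ) γ * (v ⬝ᵥ star u)).re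
            = ∑ i, ((starRingEnd ℂ) γ * (v i * (starRingEnd ℂ) (u i))).re := by
          rw [dotProduct]
          simp only [Pi.star_apply, Complex.star_def, Finset.mul_sum, Complex.re_sum]
        have hsum : ∑ i, Complex.normSq ((v + γ • u) i)
            = (∑ i, Complex.normSq (v i)) + Complex.normSq γ * nu
              + 2 * ((starRingEnd ℂ) γ * (v ⬝ᵥ star u)).re := by
          rw [hdot, hnudef, Finset.mul_sum, Finset.mul_sum,
            ← Finset.sum_add_distrib, ← Finset.sum_add_distrib]
          exact Finset.sum_congr rfl fun i _ => hterm i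
        rw [hsum, hγnormSq, hτ2nu]
        linarith [hconjγa, hbound]
      · -- value bound
        have hsplit : hbar + (v + γ • u) = (hbar + v) + γ • u := by
          rw [add_assoc]
        rw [hsplit, SDR.quad_re_add hQ, hval]
        have hmid : (star (hbar + v) ⬝ᵥ Q *ᵥ (γ • u)).re ≤ 0 := by
          rw [Matrix.mulVec_smul, dotProduct_smul, hγdef, smul_eq_mul, mul_assoc,
            Complex.re_ofReal_mul]
          exact mul_nonpos_of_nonneg_of_nonpos hτ_nonneg hωb
        have hlast : (star (γ • u) ⬝ᵥ Q *ᵥ (γ • u)).re ≤ t := by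
          have hexp : star (γ • u) ⬝ᵥ Q *ᵥ (γ • u)
              = ((Complex.normSq γ : ℝ) : ℂ) * (star u ⬝ᵥ Q *ᵥ u) := by
            rw [star_smul, Matrix.mulVec_smul, smul_dotProduct, dotProduct_smul,
              smul_eq_mul, smul_eq_mul, ← mul_assoc]
            congr 1
            rw [Complex.normSq_eq_conj_mul_self]
            rfl
          rw [hexp, Complex.re_ofReal_mul, hγnormSq]
          calc τ ^ 2 * (star u ⬝ᵥ Q *ᵥ u).re ≤ τ ^ 2 * (c * nu) := by
                apply mul_le_mul_of_nonneg_left huQ (by positivity)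
            _ = c * (τ ^ 2 * nu) := by ring
            _ = t := by rw [hτ2nu, hcs]
        linarith [hmid, hlast]
end

section
/- Complementary slackness consequence: under the additional hypothesis tr(A) = (1+r²)[A]_{n+1,n+1} (active trace constraint) or λ = 0, the identity of the previous statement simplifies to tr(Q [I,h̄] A [I,h̄]^H) = σ² [A]_{n+1,n+1}. -/
open scoped ComplexOrder
open Matrix

/-- `Ψ = [I; h̄ᴴ] Q [I, h̄] + diag(λ I, −σ² − λ r²)`. -/
noncomputable def PsiMat {n : ℕ} (Q : Matrix (Fin n) (Fin n) ℂ) (hbar : Fin n → ℂ)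
    (l σ2 r : ℝ) : Matrix (Fin n ⊕ Fin 1) (Fin n ⊕ Fin 1) ℂ :=
  (appendCol hbar)ᴴ * Q * appendCol hbar +
    Matrix.fromBlocks ((l : ℂ) • (1 : Matrix (Fin n) (Fin n) ℂ)) 0 0
      (Matrix.of fun _ _ : Fin 1 => (-(σ2 : ℂ) - (l : ℂ) * (r : ℂ) ^ 2))

/-- Under complementary slackness (`λ = 0` or an active trace constraint
`tr(A) = (1+r²)[A]_{n+1,n+1}`) the trace identity simplifies to
`tr(Q [I,h̄] A [I,h̄]ᴴ) = σ² [A]_{n+1,n+1}`. -/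
theorem kkt_trace_identity_active (n : ℕ) (Q : Matrix (Fin n) (Fin n) ℂ)
    (hQ : Q.IsHermitian) (hbar : Fin n → ℂ) (l σ2 r : ℝ) (hl : 0 ≤ l)
    (A : Matrix (Fin n ⊕ Fin 1) (Fin n ⊕ Fin 1) ℂ)
    (hΨ : (PsiMat Q hbar l σ2 r).PosSemidef)
    (hA : A.PosSemidef)
    (hΨA : PsiMat Q hbar l σ2 r * A = 0)
    (hcs : l = 0 ∨ A.trace.re = (1 + r ^ 2) * (A (Sum.inr 0) (Sum.inr 0)).re) :
    ((Q * (appendCol hbar * A * (appendCol hbar)ᴴ)).trace).re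
      = σ2 * (A (Sum.inr 0) (Sum.inr 0)).re := by
  set B := appendCol hbar with hB
  set D : Matrix (Fin n ⊕ Fin 1) (Fin n ⊕ Fin 1) ℂ :=
    Matrix.fromBlocks ((l : ℂ) • (1 : Matrix (Fin n) (Fin n) ℂ)) 0 0
      (Matrix.of fun _ _ : Fin 1 => (-(σ2 : ℂ) - (l : ℂ) * (r : ℂ) ^ 2)) with hD
  have h0 : (PsiMat Q hbar l σ2 r * A).trace = 0 := by
    rw [hΨA, Matrix.trace_zero]
  have hsplit : (PsiMat Q hbar l σ2 r * A).trace
      = (Q * (B * A * Bᴴ)).trace + (D * A).trace := by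
    have : PsiMat Q hbar l σ2 r * A = Bᴴ * Q * B * A + D * A := by
      rw [PsiMat, add_mul]
    rw [this, Matrix.trace_add]
    congr 1
    rw [show Bᴴ * Q * B * A = Bᴴ * (Q * (B * A)) by simp [Matrix.mul_assoc],
      Matrix.trace_mul_comm, Matrix.mul_assoc]
  have hDA : (D * A).trace
      = (l : ℂ) * (∑ i : Fin n, A (Sum.inl i) (Sum.inl i))
        + (-(σ2 : ℂ) - (l : ℂ) * (r : ℂ) ^ 2) * A (Sum.inr 0) (Sum.inr 0) := by
    rw [Matrix.trace]
    rw [Fintype.sum_sum_type]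
    congr 1
    · rw [Finset.mul_sum]
      refine Finset.sum_congr rfl fun i _ => ?_
      simp [Matrix.diag, Matrix.mul_apply, Fintype.sum_sum_type, hD,
        Matrix.one_apply, mul_ite, Finset.sum_ite_eq']
    · simp [Matrix.diag, Matrix.mul_apply, Fintype.sum_sum_type, hD]
  have htr : A.trace = (∑ i : Fin n, A (Sum.inl i) (Sum.inl i)) + A (Sum.inr 0) (Sum.inr 0) := by
    rw [Matrix.trace, Fintype.sum_sum_type]
    simp [Matrix.diag]
  -- the key complex identity
  have key : (Q * (B * A * Bᴴ)).trace
      = (σ2 : ℂ) * A (Sum.inr 0) (Sum.inr 0)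
        + (l : ℂ) * ((1 + (r : ℂ) ^ 2) * A (Sum.inr 0) (Sum.inr 0) - A.trace) := by
    have := h0
    rw [hsplit, hDA] at this
    rw [htr]
    ring_nf
    ring_nf at this
    linear_combination this
  have him : ∀ i, (A i i).im = 0 := by
    intro i
    have := congrFun (congrFun hA.1 i) i
    simp only [Matrix.conjTranspose_apply] at this
    have h2 : (starRingEnd ℂ) (A i i) = A i i := this
    exact Complex.conj_eq_iff_im.mp h2
  have hre := congrArg Complex.re key
  have himA : (A (Sum.inr 0) (Sum.inr 0)).im = 0 := him _
  have htrim : A.trace.im = 0 := by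
    rw [Matrix.trace]
    simp [Matrix.diag, Complex.im_sum, him]
  rcases hcs with hl0 | hact
  · rw [hre]
    simp [hl0, Complex.mul_re, himA]
  · rw [hre]
    simp only [Complex.add_re, Complex.mul_re, Complex.sub_re, Complex.sub_im,
      Complex.mul_im, Complex.ofReal_re, Complex.ofReal_im, Complex.add_im,
      Complex.one_re, Complex.one_im, himA, htrim]
    have hr2 : ((r : ℂ) ^ 2).re = r ^ 2 := by
      simp [pow_two, Complex.mul_re]
    have hr2i : ((r : ℂ) ^ 2).im = 0 := by
      simp [pow_two, Complex.mul_im]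
    rw [hr2, hr2i]
    rw [hact]
    ring
end
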